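/- Define ε(N,k,β) = 1 − (β / (N · C(N,k)))^{1/(N−k)} for natural numbers 1 ≤ k < N and real β ∈ (0,1), and ε(N,N,β) = 1. Then ε is monotonically decreasing in N: for all N ≥ k, ε(N+1,k,β) ≤ ε(N,k,β). -/

import Mathlib

lemma prod_sub_range (m : ℕ) : ∏ i ∈ Finset.range m, (m - i) = m.factorial := by
  induction m with
  | zero => simp
  | succ n ih =>
    rw [Finset.prod_range_succ']
    simp only [Nat.succ_sub_succ, Nat.sub_zero]
    rw [ih, Nat.factorial_succ, mul_comm]

lemma pow_le_mul_pow_choose (N m : ℕ) (h : m ≤ N) :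
    N ^ m ≤ m ^ m * N.choose m := by
  have key : N ^ m * m.factorial ≤ m ^ m * N.descFactorial m := by
    calc N ^ m * m.factorial
        = ∏ i ∈ Finset.range m, (N * (m - i)) := by
          rw [Finset.prod_mul_distrib, Finset.prod_const, Finset.card_range, prod_sub_range]
      _ ≤ ∏ i ∈ Finset.range m, (m * (N - i)) := by
          apply Finset.prod_le_prod
          · intros; positivity
          · intro i hi
            have hi' : i < m := Finset.mem_range.mp hi
            have h1 : i ≤ N := le_trans (le_of_lt hi') h
            zify [hi'.le, h1]
            nlinarith [mul_le_mul_of_nonneg_right (show (m:ℤ) ≤ N by exact_mod_cast h)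
              (show (0:ℤ) ≤ i by positivity)]
      _ = m ^ m * N.descFactorial m := by
          rw [Finset.prod_mul_distrib, Finset.prod_const, Finset.card_range,
            Nat.descFactorial_eq_prod_range]
  rw [Nat.descFactorial_eq_factorial_mul_choose] at key
  have key' : N ^ m * m.factorial ≤ (m ^ m * N.choose m) * m.factorial := by
    rw [mul_assoc, mul_comm (N.choose m)]; exact key
  exact Nat.le_of_mul_le_mul_right key' m.factorial_pos


lemma key_pow_ineq (N m : ℕ) (hm : 1 ≤ m) (hmN : m < N) :
    (N+1)^(2*m) * m^m ≤ N^(2*m+1) * (m+1)^m := by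
  rcases lt_or_ge N 8 with hN | hN
  · interval_cases N <;> interval_cases m <;> decide
  · have hN0 : (0:ℝ) < N := by positivity
    have hNR : (8:ℝ) ≤ N := by exact_mod_cast hN
    have e1 : ((N:ℝ)+1) ≤ N * Real.exp (1/N) := by
      have h := Real.add_one_le_exp (1/(N:ℝ))
      calc (N:ℝ)+1 = N * (1/N + 1) := by field_simp; ring
        _ ≤ N * Real.exp (1/N) := by nlinarith
    have e2 : ((N:ℝ)+1)^(2*m) ≤ (N:ℝ)^(2*m) * Real.exp (1/N) ^ (2*m) := by
      rw [← mul_pow]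
      exact pow_le_pow_left₀ (by positivity) e1 _
    have e3 : Real.exp (1/(N:ℝ)) ^ (2*m) = Real.exp ((2*m : ℕ)/(N:ℝ)) := by
      rw [← Real.exp_nat_mul]
      congr 1
      field_simp
    have e4 : Real.exp (((2*m : ℕ) : ℝ)/(N:ℝ)) ≤ Real.exp 2 := by
      apply Real.exp_le_exp.mpr
      rw [div_le_iff₀ hN0]
      have hmN' : (m:ℝ) ≤ N := by exact_mod_cast hmN.le
      push_cast
      nlinarith
    have e5 : Real.exp 2 ≤ 8 := by
      have h := Real.exp_one_lt_d9
      have h2 : Real.exp 2 = Real.exp 1 * Real.exp 1 := by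
        rw [← Real.exp_add]; norm_num
      nlinarith [Real.exp_pos 1]
    have chain : ((N:ℝ)+1)^(2*m) ≤ (N:ℝ)^(2*m+1) := by
      calc ((N:ℝ)+1)^(2*m) ≤ (N:ℝ)^(2*m) * Real.exp ((2*m : ℕ)/(N:ℝ)) := by
            rw [← e3]; exact e2
        _ ≤ (N:ℝ)^(2*m) * 8 := by
            have := le_trans e4 e5
            nlinarith [pow_nonneg hN0.le (2*m)]
        _ ≤ (N:ℝ)^(2*m) * N := by
            nlinarith [pow_nonneg hN0.le (2*m)]
        _ = (N:ℝ)^(2*m+1) := by ring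
    have final : ((N:ℝ)+1)^(2*m) * (m:ℝ)^m ≤ (N:ℝ)^(2*m+1) * ((m:ℝ)+1)^m := by
      apply mul_le_mul chain (pow_le_pow_left₀ (by positivity) (by linarith) m)
        (by positivity) (by positivity)
    exact_mod_cast final


lemma choose_pow_ineq (N k : ℕ) (hk1 : 1 ≤ k) (hkN : k < N) :
    ((N+1) * ((N+1).choose k))^(N-k) ≤ (N * N.choose k)^(N-k+1) := by
  generalize hm : N - k = m
  have hmN : m < N := by omega
  have hm1 : 1 ≤ m := by omega
  have hsym : N.choose k = N.choose m := by
    rw [← hm]; exact (Nat.choose_symm hkN.le).symm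
  have hid : (N+1) * ((N+1).choose k) * (m+1) = (N+1)^2 * N.choose k := by
    have h := Nat.choose_mul_succ_eq N k
    have hmk : N+1-k = m+1 := by omega
    rw [hmk] at h
    calc (N+1) * ((N+1).choose k) * (m+1)
        = (N+1) * ((N+1).choose k * (m+1)) := by ring
      _ = (N+1) * (N.choose k * (N+1)) := by rw [← h]
      _ = (N+1)^2 * N.choose k := by ring
  have h1 := key_pow_ineq N m hm1 hmN
  have h2 : N ^ m ≤ m ^ m * N.choose k := by
    rw [hsym]; exact pow_le_mul_pow_choose N m hmN.le
  have hspos : 0 < (m+1)^m * m^m := by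
    have : 0 < m := by omega
    positivity
  generalize hd : (N+1).choose k = d at hid ⊢
  generalize hc : N.choose k = c at hid h2 ⊢
  generalize ha : N + 1 = a at hid h1 ⊢
  generalize hs : m + 1 = s at hid h1 hspos ⊢
  apply Nat.le_of_mul_le_mul_right ?_ hspos
  calc (a * d)^m * (s^m * m^m)
      = (a * d * s)^m * m^m := by ring
    _ = (a^2 * c)^m * m^m := by rw [hid]
    _ = (a^(2*m) * m^m) * c^m := by ring
    _ ≤ (N^(2*m+1) * s^m) * c^m := by gcongr
    _ = (N^(m+1) * s^m * c^m) * N^m := by ring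
    _ ≤ (N^(m+1) * s^m * c^m) * (m^m * c) := by gcongr
    _ = (N*c)^(m+1) * (s^m * m^m) := by ring
    _ = (N*c)^s * (s^m * m^m) := by rw [← hs]

noncomputable def eps (N k : ℕ) (β : ℝ) : ℝ :=
  if k = N then 1
  else 1 - (β / (N * (N.choose k))) ^ ((1 : ℝ) / ((N : ℝ) - (k : ℝ)))

/-- ε(N,k,β) is monotonically decreasing in N. -/
theorem eps_anti_N (N k : ℕ) (hk1 : 1 ≤ k) (hkN : k ≤ N)
    (β : ℝ) (hβ0 : 0 < β) (hβ1 : β < 1) :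
    eps (N + 1) k β ≤ eps N k β := by
  by_cases hk : k = N
  · subst hk
    unfold eps
    rw [if_neg (by omega), if_pos rfl]
    have h0 : (0:ℝ) ≤ (β / (↑(k+1) * ↑((k+1).choose k))) ^ ((1:ℝ)/((↑(k+1) : ℝ) - (k:ℝ))) :=
      Real.rpow_nonneg (by positivity) _
    linarith
  · have hlt : k < N := lt_of_le_of_ne hkN hk
    unfold eps
    rw [if_neg hk, if_neg (by omega)]
    set m := N - k with hm
    have hm1 : 1 ≤ m := by omega
    have hmcast : ((N : ℝ) - (k : ℝ)) = (m : ℝ) := by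
      rw [hm]; push_cast [Nat.cast_sub hlt.le]; ring
    have hm1cast : ((↑(N+1) : ℝ) - (k : ℝ)) = (m : ℝ) + 1 := by
      push_cast; rw [← hmcast]; ring
    rw [hmcast, hm1cast]
    have hmR : (0:ℝ) < m := by exact_mod_cast hm1
    -- positivity of the denominators
    have hA : (1:ℝ) ≤ (N : ℝ) * (N.choose k : ℝ) := by
      have : 1 ≤ N * N.choose k := Nat.one_le_iff_ne_zero.mpr
        (Nat.mul_ne_zero (by omega) (Nat.choose_pos hlt.le).ne')
      exact_mod_cast this
    have hA' : (1:ℝ) ≤ ((N+1 : ℕ) : ℝ) * (((N+1).choose k) : ℝ) := by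
      have : 1 ≤ (N+1) * (N+1).choose k := Nat.one_le_iff_ne_zero.mpr
        (Nat.mul_ne_zero (by omega) (Nat.choose_pos (by omega)).ne')
      exact_mod_cast this
    set A : ℝ := (N : ℝ) * (N.choose k : ℝ) with hAdef
    set A' : ℝ := ((N+1 : ℕ) : ℝ) * (((N+1).choose k) : ℝ) with hA'def
    have hApos : (0:ℝ) < A := lt_of_lt_of_le one_pos hA
    have hA'pos : (0:ℝ) < A' := lt_of_lt_of_le one_pos hA'
    have hu : (0:ℝ) < β / A := by positivity
    have hv : (0:ℝ) < β / A' := by positivity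
    apply sub_le_sub_left
    -- core polynomial inequality
    have hnat := choose_pow_ineq N k hk1 hlt
    have hnatR : (A')^m ≤ A^(m+1) := by
      rw [← hm] at hnat
      rw [hAdef, hA'def]
      exact_mod_cast hnat
    have core : (β / A)^(m+1) ≤ (β / A')^m := by
      rw [div_pow, div_pow]
      rw [div_le_div_iff₀ (by positivity) (by positivity)]
      calc β^(m+1) * A'^m = β * (β^m * A'^m) := by ring
        _ ≤ 1 * (β^m * A'^m) := by
            apply mul_le_mul_of_nonneg_right hβ1.le (by positivity)
        _ = β^m * A'^m := by ring
        _ ≤ β^m * A^(m+1) := by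
            apply mul_le_mul_of_nonneg_left hnatR (by positivity)
    have key1 : (β/A) ^ ((1:ℝ)/(m:ℝ)) = ((β/A)^(m+1)) ^ ((1:ℝ)/((m:ℝ)*((m:ℝ)+1))) := by
      rw [← Real.rpow_natCast (β/A) (m+1), ← Real.rpow_mul hu.le]
      congr 1
      push_cast
      field_simp
    have key2 : (β/A') ^ ((1:ℝ)/((m:ℝ)+1)) = ((β/A')^m) ^ ((1:ℝ)/((m:ℝ)*((m:ℝ)+1))) := by
      rw [← Real.rpow_natCast (β/A') m, ← Real.rpow_mul hv.le]
      congr 1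
      field_simp
    rw [key1, key2]
    exact Real.rpow_le_rpow (by positivity) core (by positivity)
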